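/- Let h be a transcendental real number and for a rational number a define δ(a) = (a²−a) + (a⁴−a³+2a−1)/((a³−3a+1)h² + a²+a+1). Then the denominator (a³−3a+1)h²+a²+a+1 is nonzero for all rational a, and δ(a) ≠ 0 for all rational a with a(a+1) ≠ 0. -/

import Mathlib

open Polynomial

/-- The cubic `x³ - 3x + 1` has no rational root. -/
lemma cubic_no_rat_root (a : ℚ) : a^3 - 3*a + 1 ≠ 0 := by
  intro hroot
  set n : ℤ := a.num with hn
  set d : ℤ := (a.den : ℤ) with hd
  have hd0 : (d : ℚ) ≠ 0 := by
    rw [hd]; push_cast; exact_mod_cast a.den_nz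
  have ha : (a : ℚ) = (n : ℚ) / (d : ℚ) := by
    rw [hn, hd]; exact_mod_cast (Rat.num_div_den a).symm
  have hint : (n:ℚ)^3 - 3*n*d^2 + d^3 = 0 := by
    rw [ha] at hroot
    field_simp at hroot
    have hmul : ((n:ℚ)^3 - 3*n*d^2 + d^3) * d = 0 := by linear_combination (d:ℚ) * hroot
    rcases mul_eq_zero.mp hmul with h' | h'
    · exact h'
    · exact absurd h' hd0
  have hintZ : n^3 - 3*n*d^2 + d^3 = 0 := by exact_mod_cast hint
  have hcop : IsCoprime n d := by
    rw [hn, hd, Int.isCoprime_iff_gcd_eq_one]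
    exact a.reduced
  -- reduce mod 2
  have h2 : ((n : ZMod 2))^3 - 3*(n : ZMod 2)*(d : ZMod 2)^2 + (d : ZMod 2)^3 = 0 := by
    have := congrArg (Int.cast : ℤ → ZMod 2) hintZ
    push_cast at this
    exact this
  have hnot : ¬((n : ZMod 2) = 0 ∧ (d : ZMod 2) = 0) := by
    rintro ⟨h1, h2'⟩
    have hn2 : (2:ℤ) ∣ n := by exact_mod_cast (ZMod.intCast_zmod_eq_zero_iff_dvd n 2).mp h1
    have hd2 : (2:ℤ) ∣ d := by exact_mod_cast (ZMod.intCast_zmod_eq_zero_iff_dvd d 2).mp h2'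
    have := hcop.isUnit_of_dvd' hn2 hd2
    norm_num [Int.isUnit_iff] at this
  revert h2 hnot
  generalize (n : ZMod 2) = x
  generalize (d : ZMod 2) = y
  revert x y
  decide

/-- For `h` transcendental, the denominator `(a³−3a+1)h²+a²+a+1` is nonzero for all
rational `a`, and `δ(a) = (a²−a) + (a⁴−a³+2a−1)/((a³−3a+1)h²+a²+a+1)` is nonzero
whenever `a(a+1) ≠ 0`. -/
theorem stmt_1 (h : ℝ) (hh : Transcendental ℚ h) :
    (∀ a : ℚ, ((a : ℝ)^3 - 3*a + 1) * h^2 + (a : ℝ)^2 + a + 1 ≠ 0) ∧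
    (∀ a : ℚ, a * (a + 1) ≠ 0 →
      ((a : ℝ)^2 - a) +
        ((a : ℝ)^4 - (a : ℝ)^3 + 2*a - 1) /
          (((a : ℝ)^3 - 3*a + 1) * h^2 + (a : ℝ)^2 + a + 1) ≠ 0) := by
  -- key: for rationals q ≠ 0, r, we have q h² + r ≠ 0
  have key : ∀ q r : ℚ, q ≠ 0 → (q : ℝ) * h^2 + (r : ℝ) ≠ 0 := by
    intro q r hq H
    apply hh
    refine ⟨Polynomial.C q * Polynomial.X^2 + Polynomial.C r, ?_, ?_⟩
    · intro h0
      have := congrArg (fun p => Polynomial.coeff p 2) h0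
      simp [Polynomial.coeff_C] at this
      exact hq this
    · simp only [map_add, map_mul, Polynomial.aeval_C, Polynomial.aeval_X, map_pow]
      rw [show (algebraMap ℚ ℝ) q = (q : ℝ) from rfl,
          show (algebraMap ℚ ℝ) r = (r : ℝ) from rfl]
      exact H
  have part1 : ∀ a : ℚ, ((a : ℝ)^3 - 3*a + 1) * h^2 + (a : ℝ)^2 + a + 1 ≠ 0 := by
    intro a H
    apply key (a^3 - 3*a + 1) (a^2 + a + 1) (cubic_no_rat_root a)
    push_cast
    linarith [H]
  refine ⟨part1, ?_⟩
  intro a ha H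
  have hD := part1 a
  have ha0 : a ≠ 0 := by intro h0; apply ha; rw [h0]; ring
  by_cases h1 : a = 1
  · subst h1
    norm_num at H
    apply hD
    push_cast
    linarith [H]
  · -- a ≠ 0, a ≠ 1, so (a²−a)(a³−3a+1) ≠ 0
    have hq : (a^2 - a) * (a^3 - 3*a + 1) ≠ 0 := by
      apply mul_ne_zero
      · intro h0
        have : a * (a - 1) = 0 := by linarith [h0]
        rcases mul_eq_zero.mp this with h' | h'
        · exact ha0 h'
        · exact h1 (by linarith [h'])
      · exact cubic_no_rat_root a
    apply key _ (2*a^4 - a^3 + a - 1) hq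
    have H' : ((a : ℝ)^2 - a) * (((a : ℝ)^3 - 3*a + 1) * h^2 + (a : ℝ)^2 + a + 1)
        + ((a : ℝ)^4 - (a : ℝ)^3 + 2*a - 1) = 0 := by
      rw [add_div' _ _ _ hD, div_eq_zero_iff] at H
      rcases H with H | H
      · linarith [H]
      · exact absurd H hD
    push_cast
    linear_combination H'
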